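/- arXiv:1811.06097 — 4 statements merged into one kernel-verified Lean document; each statement's English description precedes it below -/
import Mathlib

section
/- The Alexandrov topology on 2-dimensional Minkowski space, generated by the sets I⁺(x) and I⁻(y) for all x, y, equals the Euclidean topology on ℝ². -/
/-- Minkowski quadratic form on ℝ². -/
def Q (v : ℝ × ℝ) : ℝ := v.1 ^ 2 - v.2 ^ 2

def Chron (x y : ℝ × ℝ) : Prop := Q (y - x) > 0 ∧ (y - x).1 > 0

lemma gen_open_of_nhds {X : Type*} {S : Set (Set X)} {U : Set X}
    (h : ∀ p ∈ U, ∃ V, TopologicalSpace.GenerateOpen S V ∧ p ∈ V ∧ V ⊆ U) :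
    TopologicalSpace.GenerateOpen S U := by
  have hU : U = ⋃₀ {V | TopologicalSpace.GenerateOpen S V ∧ V ⊆ U} := by
    ext p
    constructor
    · intro hp
      obtain ⟨V, hV, hpV, hVU⟩ := h p hp
      exact ⟨V, ⟨hV, hVU⟩, hpV⟩
    · rintro ⟨V, ⟨_, hVU⟩, hpV⟩
      exact hVU hpV
  rw [hU]
  exact .sUnion _ fun V hV => hV.1

theorem alexandrov_eq_euclidean :
    TopologicalSpace.generateFrom
      ({S : Set (ℝ × ℝ) | ∃ x, S = {z | Chron x z}} ∪
        {S : Set (ℝ × ℝ) | ∃ y, S = {z | Chron z y}}) =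
      (inferInstance : TopologicalSpace (ℝ × ℝ)) := by
  apply le_antisymm
  · -- generateFrom ≤ euclidean : every euclidean-open set is generate-open
    intro U hU
    rw [Metric.isOpen_iff] at hU
    apply gen_open_of_nhds
    intro p hp
    obtain ⟨ε, hε, hball⟩ := hU p hp
    refine ⟨{z | Chron (p - (ε, 0)) z} ∩ {z | Chron z (p + (ε, 0))}, ?_, ?_, ?_⟩
    · exact .inter _ _ (.basic _ (Or.inl ⟨_, rfl⟩)) (.basic _ (Or.inr ⟨_, rfl⟩))
    · constructor
      · refine ⟨?_, ?_⟩ <;> simp [Q, Prod.sub_def] <;> nlinarith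
      · refine ⟨?_, ?_⟩ <;> simp [Q, Prod.sub_def] <;> nlinarith
    · rintro z ⟨⟨hq1, hf1⟩, ⟨hq2, hf2⟩⟩
      apply hball
      simp only [Q, Prod.sub_def, Prod.fst_add, Prod.snd_add, Prod.fst_sub,
        Prod.snd_sub] at hq1 hf1 hq2 hf2
      norm_num at hq1 hf1 hq2 hf2
      simp only [Metric.mem_ball, Prod.dist_eq, Real.dist_eq, max_lt_iff]
      have h1 : -ε < z.2 - p.2 := by
        nlinarith [sq_nonneg (z.1 - p.1 + ε + (z.2 - p.2)), sq_nonneg (p.1 + ε - z.1 + (z.2 - p.2))]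
      have h2 : z.2 - p.2 < ε := by
        nlinarith [sq_nonneg (z.1 - p.1 + ε - (z.2 - p.2)), sq_nonneg (p.1 + ε - z.1 - (z.2 - p.2))]
      exact ⟨abs_lt.2 ⟨by linarith, by linarith⟩, abs_lt.2 ⟨h1, h2⟩⟩
  · -- euclidean ≤ generateFrom : generators are euclidean-open
    apply le_generateFrom
    rintro s (⟨x, rfl⟩ | ⟨y, rfl⟩)
    · have : {z | Chron x z} =
          {z : ℝ × ℝ | (0:ℝ) < (z.1 - x.1) ^ 2 - (z.2 - x.2) ^ 2} ∩
          {z : ℝ × ℝ | (0:ℝ) < z.1 - x.1} := by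
        ext z; simp [Chron, Q, Prod.sub_def, and_comm]
      rw [this]
      exact (isOpen_lt continuous_const (by fun_prop)).inter
        (isOpen_lt continuous_const (by fun_prop))
    · have : {z | Chron z y} =
          {z : ℝ × ℝ | (0:ℝ) < (y.1 - z.1) ^ 2 - (y.2 - z.2) ^ 2} ∩
          {z : ℝ × ℝ | (0:ℝ) < y.1 - z.1} := by
        ext z; simp [Chron, Q, Prod.sub_def, and_comm]
      rw [this]
      exact (isOpen_lt continuous_const (by fun_prop)).inter
        (isOpen_lt continuous_const (by fun_prop))
end

section
/- The interval topology T_in^≪ on 2-dimensional Minkowski space, generated by the subbasis of complements M∖I⁺(x) and M∖I⁻(x) of chronological future and past cones, is incomparable with the Euclidean topology: neither topology is contained in the other. -/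
/-- The interval topology generated by complements of chronological cones. -/
def Tin : TopologicalSpace (ℝ × ℝ) :=
  TopologicalSpace.generateFrom
    ({S : Set (ℝ × ℝ) | ∃ x, S = {z | Chron x z}ᶜ} ∪
      {S : Set (ℝ × ℝ) | ∃ x, S = {z | Chron z x}ᶜ})

/-- Every `Tin`-open set containing `p` eventually contains the vertical ray from `p`. -/
lemma tin_ray (S : Set (ℝ × ℝ))
    (hS : TopologicalSpace.GenerateOpen
      ({S : Set (ℝ × ℝ) | ∃ x, S = {z | Chron x z}ᶜ} ∪
        {S : Set (ℝ × ℝ) | ∃ x, S = {z | Chron z x}ᶜ}) S) :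
    ∀ p ∈ S, ∃ T : ℝ, ∀ t ≥ T, p + ((0 : ℝ), t) ∈ S := by
  induction hS with
  | basic s hs =>
      intro p _
      rcases hs with ⟨x, rfl⟩ | ⟨x, rfl⟩
      · refine ⟨|p.1 - x.1| + |p.2 - x.2| + 1, fun t ht => ?_⟩
        intro hc
        have hQ := hc.1
        simp only [Q, Prod.fst_sub, Prod.snd_sub, Prod.fst_add, Prod.snd_add] at hQ
        have h1 : p.1 - x.1 ≤ |p.1 - x.1| := le_abs_self _
        have h2 : -(p.1 - x.1) ≤ |p.1 - x.1| := neg_le_abs _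
        have h3 : -(p.2 - x.2) ≤ |p.2 - x.2| := neg_le_abs _
        have h4 : (0:ℝ) ≤ |p.1 - x.1| := abs_nonneg _
        have h5 : (0:ℝ) ≤ |p.2 - x.2| := abs_nonneg _
        nlinarith [sq_nonneg (p.2 + t - x.2)]
      · refine ⟨|x.1 - p.1| + |x.2 - p.2| + 1, fun t ht => ?_⟩
        intro hc
        have hQ := hc.1
        simp only [Q, Prod.fst_sub, Prod.snd_sub, Prod.fst_add, Prod.snd_add] at hQ
        have h1 : x.1 - p.1 ≤ |x.1 - p.1| := le_abs_self _
        have h2 : -(x.1 - p.1) ≤ |x.1 - p.1| := neg_le_abs _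
        have h3 : x.2 - p.2 ≤ |x.2 - p.2| := le_abs_self _
        have h4 : (0:ℝ) ≤ |x.1 - p.1| := abs_nonneg _
        have h5 : (0:ℝ) ≤ |x.2 - p.2| := abs_nonneg _
        nlinarith
  | univ => exact fun p _ => ⟨0, fun t _ => trivial⟩
  | inter s₁ s₂ _ _ ih₁ ih₂ =>
      intro p hp
      obtain ⟨T₁, h₁⟩ := ih₁ p hp.1
      obtain ⟨T₂, h₂⟩ := ih₂ p hp.2
      exact ⟨max T₁ T₂, fun t ht =>
        ⟨h₁ t (le_trans (le_max_left _ _) ht), h₂ t (le_trans (le_max_right _ _) ht)⟩⟩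
  | sUnion 𝒮 _ ih =>
      intro p hp
      obtain ⟨s, hs, hps⟩ := hp
      obtain ⟨T, hT⟩ := ih s hs p hps
      exact ⟨T, fun t ht => ⟨s, hs, hT t ht⟩⟩

theorem interval_incomparable_euclidean :
    ¬ (Tin ≤ (inferInstance : TopologicalSpace (ℝ × ℝ))) ∧
    ¬ ((inferInstance : TopologicalSpace (ℝ × ℝ)) ≤ Tin) := by
  constructor
  · intro h
    have hb : Tin.IsOpen (Metric.ball (0 : ℝ × ℝ) 1) := h _ Metric.isOpen_ball
    have hray := tin_ray (Metric.ball (0 : ℝ × ℝ) 1) hb (0 : ℝ × ℝ)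
      (Metric.mem_ball_self one_pos)
    obtain ⟨T, hT⟩ := hray
    have h2 : ((0:ℝ×ℝ) + ((0:ℝ), max T 2)) ∈ Metric.ball (0 : ℝ × ℝ) 1 :=
      hT _ (le_max_left _ _)
    rw [Metric.mem_ball] at h2
    have hd : dist ((0:ℝ×ℝ) + ((0:ℝ), max T 2)) (0 : ℝ × ℝ) ≥ 2 := by
      have : ((0:ℝ×ℝ) + ((0:ℝ), max T 2)).2 = max T 2 := by simp
      calc (2:ℝ) ≤ max T 2 := le_max_right _ _
        _ ≤ |max T 2 - 0| := by rw [sub_zero]; exact le_abs_self _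
        _ = dist ((0:ℝ×ℝ) + ((0:ℝ), max T 2)).2 (0:ℝ×ℝ).2 := by
              rw [Real.dist_eq]; simp
        _ ≤ dist ((0:ℝ×ℝ) + ((0:ℝ), max T 2)) (0 : ℝ × ℝ) := by
              rw [Prod.dist_eq]; exact le_max_right _ _
    linarith
  · intro h
    have hg : Tin.IsOpen {z : ℝ × ℝ | Chron 0 z}ᶜ :=
      TopologicalSpace.isOpen_generateFrom_of_mem (Or.inl ⟨0, rfl⟩)
    have ho : IsOpen {z : ℝ × ℝ | Chron 0 z}ᶜ := h _ hg
    have hmem : ((1:ℝ), (1:ℝ)) ∈ {z : ℝ × ℝ | Chron 0 z}ᶜ := by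
      intro hc
      have := hc.1
      simp [Q, Chron] at this
    rw [Metric.isOpen_iff] at ho
    obtain ⟨ε, hε, hball⟩ := ho _ hmem
    have hq : ((1 + ε/2 : ℝ), (1:ℝ)) ∈ Metric.ball (((1:ℝ), (1:ℝ)) : ℝ × ℝ) ε := by
      rw [Metric.mem_ball, Prod.dist_eq]
      have h1 : dist (1 + ε/2 : ℝ) 1 = ε/2 := by
        rw [Real.dist_eq]
        rw [show (1 + ε/2 - 1 : ℝ) = ε/2 by ring]
        exact abs_of_nonneg (by linarith)
      have h2 : dist (1:ℝ) 1 = 0 := dist_self _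
      rw [h1, h2]
      rw [max_eq_left (by linarith)]
      linarith
    have := hball hq
    apply this
    refine ⟨?_, ?_⟩
    · show Q (((1 + ε/2 : ℝ), (1:ℝ)) - 0) > 0
      simp only [Q, sub_zero]
      nlinarith
    · show ((((1 + ε/2 : ℝ), (1:ℝ)) : ℝ × ℝ) - 0).1 > 0
      simp only [sub_zero]
      norm_num
      linarith
end

section
/- The intersection topology Z_in^≪ on 2-dimensional Minkowski space, with basis {U ∩ V : U Euclidean-open, V open in T_in^≪}, is strictly finer than the Euclidean topology. -/
/-- The intersection topology of the Euclidean topology and `Tin`. -/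
def Zin : TopologicalSpace (ℝ × ℝ) :=
  TopologicalSpace.generateFrom
    {W : Set (ℝ × ℝ) | ∃ U V, IsOpen U ∧ Tin.IsOpen V ∧ W = U ∩ V}

lemma zin_le : Zin ≤ (inferInstance : TopologicalSpace (ℝ × ℝ)) := by
  intro U hU
  exact TopologicalSpace.GenerateOpen.basic U
    ⟨U, Set.univ, hU, @isOpen_univ _ Tin, (Set.inter_univ U).symm⟩

lemma not_le_zin :
    ¬ (inferInstance : TopologicalSpace (ℝ × ℝ)) ≤ Zin := by
  intro h
  set S : Set (ℝ × ℝ) := {z | Chron 0 z}ᶜ with hSdef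
  have hZ : Zin.IsOpen S :=
    TopologicalSpace.GenerateOpen.basic S
      ⟨Set.univ, S, isOpen_univ,
       TopologicalSpace.GenerateOpen.basic S (Or.inl ⟨0, rfl⟩),
       (Set.univ_inter S).symm⟩
  have hS : IsOpen S := h S hZ
  have hmem : ((1, 1) : ℝ × ℝ) ∈ S := by
    intro hc
    have : Q (((1, 1) : ℝ × ℝ) - 0) > 0 := hc.1
    simp [Q] at this
  obtain ⟨ε, hε, hball⟩ := Metric.isOpen_iff.mp hS _ hmem
  set p : ℝ × ℝ := (1 + ε / 2, 1) with hp
  have hdist : dist p ((1, 1) : ℝ × ℝ) < ε := by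
    have : dist p ((1, 1) : ℝ × ℝ) = ε / 2 := by
      simp [hp, Prod.dist_eq, Real.dist_eq, abs_of_pos hε]
      linarith
    rw [this]; linarith
  have hpS : p ∈ S := hball hdist
  apply hpS
  constructor
  · show Q (p - 0) > 0
    simp only [hp, sub_zero, Q]
    nlinarith
  · show (p - 0).1 > 0
    simp only [hp, sub_zero]
    norm_num
    linarith

/-- `Zin` is strictly finer than the Euclidean topology (finer = `≤` in Mathlib). -/
theorem intersection_strictly_finer :
    Zin < (inferInstance : TopologicalSpace (ℝ × ℝ)) := by
  exact lt_of_le_not_ge zin_le not_le_zin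
end

section
/- In 2-dimensional Minkowski space, the chronological order and the horismos determine each other: x lies on the future light cone of y or equals it in the sense that Q(y−x) = 0 with (y−x)₀ ≥ 0 if and only if (x does not chronologically precede y) and (for all z, y ≪ z implies x ≪ z). -/
theorem horismos_iff_chron_characterization (x y : ℝ × ℝ) :
    (Q (y - x) = 0 ∧ (y - x).1 ≥ 0) ↔
      (¬ Chron x y ∧ ∀ z : ℝ × ℝ, Chron y z → Chron x z) := by
  simp only [Q, Chron, Prod.fst_sub, Prod.snd_sub]
  constructor
  · rintro ⟨hQ, hd⟩
    constructor
    · rintro ⟨hQ', _⟩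
      linarith
    · rintro z ⟨hQz, hz1⟩
      constructor
      · nlinarith [sq_nonneg ((z.1 - y.1) + (z.2 - y.2)), sq_nonneg ((z.1 - y.1) - (z.2 - y.2)),
          sq_nonneg ((y.1 - x.1) + (y.2 - x.2)), sq_nonneg ((y.1 - x.1) - (y.2 - x.2)),
          mul_nonneg (le_of_lt hz1) hd]
      · linarith
  · rintro ⟨hnc, hall⟩
    set d1 := y.1 - x.1 with hd1
    set d2 := y.2 - x.2 with hd2
    have hd1nn : d1 ≥ 0 := by
      by_contra h
      push_neg at h
      have hc := hall (y.1 + (-d1 / 2), y.2) ⟨by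
        simp only [Q, Prod.fst_sub, Prod.snd_sub]; nlinarith, by
        simp only [Prod.fst_sub]; linarith⟩
      simp only [Q, Prod.fst_sub, Prod.snd_sub] at hc
      obtain ⟨_, h2⟩ := hc
      simp only [hd1] at h
      linarith
    have hQnn : d1 ^ 2 ≥ d2 ^ 2 := by
      by_contra h
      push_neg at h
      have habs : |d2| > d1 := by
        nlinarith [sq_abs d2, abs_nonneg d2]
      have hc := hall (y.1 + (|d2| - d1), y.2) ⟨by
        simp only [Q, Prod.fst_sub, Prod.snd_sub]; nlinarith, by
        simp only [Prod.fst_sub]; linarith⟩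
      simp only [Q, Prod.fst_sub, Prod.snd_sub] at hc
      obtain ⟨h1, _⟩ := hc
      have : y.1 + (|d2| - d1) - x.1 = |d2| := by simp only [hd1]; ring
      rw [this, ← hd2] at h1
      nlinarith [sq_abs d2]
    constructor
    · by_contra hne
      have hQpos : d1 ^ 2 - d2 ^ 2 > 0 := lt_of_le_of_ne (by linarith) (Ne.symm hne)
      have : ¬ (d1 > 0) := fun h => hnc ⟨hQpos, h⟩
      push_neg at this
      nlinarith
    · exact hd1nn
end
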